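/- Let C_n → ⋯ → C_0 be an acyclic bounded chain complex of finite-dimensional real inner product spaces, with boundary maps ∂_i : C_i → C_{i−1} (conventions ∂_0 = 0, ∂_{n+1} = 0), and let ∂_i* denote the adjoint of ∂_i. Define the Laplacians Δ_i = ∂_{i+1} ∘ ∂_{i+1}* + ∂_i* ∘ ∂_i : C_i → C_i. Then each Δ_i is invertible (indeed positive definite) and the alternating product of their determinants is trivial: ∏_{i=0}^{n} (det Δ_i)^{(−1)^i} = 1. -/

import Mathlib

open LinearMap Submodule

section Aux

private lemma det_of_subsingleton' {M : Type*} [AddCommGroup M] [Module ℝ M] [Subsingleton M]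
    (f : M →ₗ[ℝ] M) : LinearMap.det f = 1 := by
  have : f = LinearMap.id := by ext x; exact Subsingleton.elim _ _
  rw [this]; exact LinearMap.det_id

private lemma aux_det_prodMap {M N : Type*} [AddCommGroup M] [Module ℝ M] [AddCommGroup N]
    [Module ℝ N] [FiniteDimensional ℝ M] [FiniteDimensional ℝ N]
    (f : M →ₗ[ℝ] M) (g : N →ₗ[ℝ] N) :
    LinearMap.det (f.prodMap g) = LinearMap.det f * LinearMap.det g := by
  classical
  let b := Module.finBasis ℝ M
  let c := Module.finBasis ℝ N
  rw [← LinearMap.det_toMatrix (b.prod c), LinearMap.toMatrix_prodMap,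
    Matrix.det_fromBlocks_zero₂₁, LinearMap.det_toMatrix, LinearMap.det_toMatrix]

private lemma det_conj' {M N : Type*} [AddCommGroup M] [Module ℝ M] [AddCommGroup N] [Module ℝ N]
    (f : M →ₗ[ℝ] M) (g : N →ₗ[ℝ] N) (e : M ≃ₗ[ℝ] N)
    (h : g ∘ₗ (e : M →ₗ[ℝ] N) = (e : M →ₗ[ℝ] N) ∘ₗ f) :
    LinearMap.det g = LinearMap.det f := by
  have : g = (e : M →ₗ[ℝ] N) ∘ₗ f ∘ₗ (e.symm : N →ₗ[ℝ] M) := by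
    ext y
    have := congrArg (fun (u : M →ₗ[ℝ] N) => u (e.symm y)) h
    simpa using this
  rw [this, LinearMap.det_conj]

private lemma det_restrict_mul {M : Type*} [AddCommGroup M] [Module ℝ M] [FiniteDimensional ℝ M]
    {p q : Submodule ℝ M} (h : IsCompl p q) (f : M →ₗ[ℝ] M)
    (hp : ∀ x ∈ p, f x ∈ p) (hq : ∀ x ∈ q, f x ∈ q) :
    LinearMap.det f = LinearMap.det (f.restrict hp) * LinearMap.det (f.restrict hq) := by
  let e := Submodule.prodEquivOfIsCompl p q h
  have key : f ∘ₗ (e : (p × q) →ₗ[ℝ] M) =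
      (e : (p × q) →ₗ[ℝ] M) ∘ₗ ((f.restrict hp).prodMap (f.restrict hq)) := by
    ext x <;> simp [e, Submodule.coe_prodEquivOfIsCompl', LinearMap.restrict_apply]
  rw [det_conj' _ f e key, aux_det_prodMap]

private lemma det_restrict_congr {M : Type*} [AddCommGroup M] [Module ℝ M]
    {f g : M →ₗ[ℝ] M} {p q : Submodule ℝ M} (hpq : p = q)
    (hfg : ∀ x ∈ p, f x = g x) (hf : ∀ x ∈ p, f x ∈ p) (hg : ∀ x ∈ q, g x ∈ q) :
    LinearMap.det (f.restrict hf) = LinearMap.det (g.restrict hg) := by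
  subst hpq
  have : f.restrict hf = g.restrict hg := by
    ext x
    simpa [LinearMap.restrict_apply] using hfg x x.2
  rw [this]

private lemma bijective_of_det_ne_zero' {M : Type*} [AddCommGroup M] [Module ℝ M]
    [FiniteDimensional ℝ M] (f : M →ₗ[ℝ] M) (h : LinearMap.det f ≠ 0) :
    Function.Bijective f := by
  classical
  let b := Module.finBasis ℝ M
  have h1 : IsUnit (LinearMap.toMatrixAlgEquiv b f) := by
    rw [Matrix.isUnit_iff_isUnit_det]
    refine isUnit_iff_ne_zero.mpr ?_
    show (LinearMap.toMatrix b b f).det ≠ 0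
    rwa [LinearMap.det_toMatrix]
  have h2 : IsUnit f := by
    have := h1.map (LinearMap.toMatrixAlgEquiv b).symm
    simpa using this
  exact (Module.End.isUnit_iff f).mp h2

private lemma telescope' (g h : ℕ → ℝ) (hg : ∀ i, g i ≠ 0) (h0 : h 0 = g 0)
    (hs : ∀ i, h (i + 1) = g (i + 1) * g i) (m : ℕ) :
    ∏ i ∈ Finset.range (m + 1), (h i) ^ ((-1 : ℤ) ^ i) = (g m) ^ ((-1 : ℤ) ^ m) := by
  induction m with
  | zero => simp [h0]
  | succ k ih =>
      rw [Finset.prod_range_succ, ih, hs k]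
      have h2 : ((-1 : ℤ) ^ (k + 1)) = -((-1 : ℤ) ^ k) := by ring
      rw [h2, zpow_neg, mul_zpow, mul_inv,
        mul_comm ((g (k + 1) ^ ((-1 : ℤ) ^ k))⁻¹) ((g k ^ ((-1 : ℤ) ^ k))⁻¹), ← mul_assoc,
        mul_inv_cancel₀ (zpow_ne_zero _ (hg k)), one_mul, zpow_neg]

end Aux

section Adj

variable {M N : Type*} [NormedAddCommGroup M] [InnerProductSpace ℝ M] [FiniteDimensional ℝ M]
  [NormedAddCommGroup N] [InnerProductSpace ℝ N] [FiniteDimensional ℝ N]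

private lemma ker_adjoint_eq (T : M →ₗ[ℝ] N) :
    LinearMap.ker (LinearMap.adjoint T) = (LinearMap.range T)ᗮ := by
  ext x
  simp only [LinearMap.mem_ker, Submodule.mem_orthogonal]
  constructor
  · rintro h u ⟨z, rfl⟩
    rw [← LinearMap.adjoint_inner_right, h, inner_zero_right]
  · intro h
    apply ext_inner_left ℝ
    intro v
    rw [LinearMap.adjoint_inner_right, inner_zero_right]
    exact h (T v) ⟨v, rfl⟩

private lemma maps_range (T : M →ₗ[ℝ] N) :
    ∀ x ∈ LinearMap.range T, (T ∘ₗ LinearMap.adjoint T) x ∈ LinearMap.range T :=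
  fun x _ => ⟨LinearMap.adjoint T x, rfl⟩

private lemma maps_kerorth (T : M →ₗ[ℝ] N) :
    ∀ x ∈ (LinearMap.ker T)ᗮ, (LinearMap.adjoint T ∘ₗ T) x ∈ (LinearMap.ker T)ᗮ := by
  intro x _
  rw [Submodule.mem_orthogonal]
  intro u hu
  rw [LinearMap.comp_apply, real_inner_comm, LinearMap.adjoint_inner_left,
    LinearMap.mem_ker.mp hu, inner_zero_right]

/-- The isomorphism `(ker T)ᗮ ≃ range T` induced by `T`. -/
private noncomputable def kerOrthEquivRange (T : M →ₗ[ℝ] N) :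
    ((LinearMap.ker T)ᗮ : Submodule ℝ M) ≃ₗ[ℝ] (LinearMap.range T : Submodule ℝ N) := by
  refine LinearEquiv.ofBijective
    ((T.domRestrict (LinearMap.ker T)ᗮ).codRestrict (LinearMap.range T)
      (fun x => ⟨x, rfl⟩)) ⟨?_, ?_⟩
  · intro x y hxy
    have h : T (x - y : M) = 0 := by
      have := congrArg (Subtype.val) hxy
      change T x = T y at this
      simp [map_sub, this]
    have hm : ((x : M) - y) ∈ (LinearMap.ker T)ᗮ := sub_mem x.2 y.2
    have : ((x : M) - y) = 0 := by
      have h0 := (Submodule.mem_orthogonal _ _).mp hm ((x : M) - y) (LinearMap.mem_ker.mpr h)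
      exact inner_self_eq_zero.mp h0
    exact Subtype.ext (sub_eq_zero.mp this)
  · rintro ⟨y, z, rfl⟩
    refine ⟨⟨z - (orthogonalProjection (LinearMap.ker T) z : M),
      sub_starProjection_mem_orthogonal z⟩, ?_⟩
    apply Subtype.ext
    simp only [LinearMap.codRestrict_apply, LinearMap.domRestrict_apply, map_sub]
    have : T ((orthogonalProjection (LinearMap.ker T) z : M)) = 0 :=
      LinearMap.mem_ker.mp (orthogonalProjection (LinearMap.ker T) z).2
    show T (z - (orthogonalProjection (LinearMap.ker T) z : M)) = T z
    rw [map_sub, this, sub_zero]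

/-- The determinant of `T*T` restricted to `(ker T)ᗮ`. -/
private noncomputable def detB (T : M →ₗ[ℝ] N) : ℝ :=
  LinearMap.det ((LinearMap.adjoint T ∘ₗ T).restrict (maps_kerorth T))

private lemma detA_eq_detB (T : M →ₗ[ℝ] N) :
    LinearMap.det ((T ∘ₗ LinearMap.adjoint T).restrict (maps_range T)) = detB T := by
  apply det_conj' _ _ (kerOrthEquivRange T)
  ext x
  rfl

private lemma bij_restrict_adjTT (T : M →ₗ[ℝ] N) :
    Function.Bijective ((LinearMap.adjoint T ∘ₗ T).restrict (maps_kerorth T)) := by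
  rw [Function.Bijective, ← LinearMap.injective_iff_surjective, and_self]
  rw [← LinearMap.ker_eq_bot, Submodule.eq_bot_iff]
  rintro ⟨x, hx⟩ h
  have h' : LinearMap.adjoint T (T x) = 0 := by
    have := congrArg Subtype.val h
    simpa [LinearMap.restrict_apply] using this
  have hTx : T x = 0 := by
    have : (inner ℝ (T x) (T x) : ℝ) = 0 := by
      rw [← LinearMap.adjoint_inner_left, h', inner_zero_left]
    exact inner_self_eq_zero.mp this
  have : (x : M) = 0 := by
    have h0 := (Submodule.mem_orthogonal _ _).mp hx x (LinearMap.mem_ker.mpr hTx)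
    exact inner_self_eq_zero.mp h0
  exact Subtype.ext this

private lemma detB_ne_zero (T : M →ₗ[ℝ] N) : detB T ≠ 0 := by
  intro h0
  have hk := LinearMap.bot_lt_ker_of_det_eq_zero h0
  rw [LinearMap.ker_eq_bot.mpr (bij_restrict_adjTT T).1] at hk
  exact lt_irrefl _ hk

private lemma detB_eq_one (T : M →ₗ[ℝ] N) [Subsingleton M] : detB T = 1 :=
  det_of_subsingleton' _

end Adj

/-- For an acyclic bounded chain complex of finite-dimensional real inner product spaces
(encoded by spaces `C i` for `i : ℕ`, trivial above degree `n`, with boundaries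
`d i : C (i+1) → C i`, so `∂_{i+1} = d i`), the Laplacians
`Δ_i = ∂_{i+1}∘∂_{i+1}* + ∂_i*∘∂_i` are all bijective (invertible) and the alternating
product of their determinants equals `1`. -/
theorem alternating_product_of_laplacian_determinants (n : ℕ) (C : ℕ → Type*)
    [∀ i, NormedAddCommGroup (C i)] [∀ i, InnerProductSpace ℝ (C i)]
    [∀ i, FiniteDimensional ℝ (C i)]
    (hbound : ∀ i, n < i → Subsingleton (C i))
    (d : ∀ i : ℕ, C (i + 1) →ₗ[ℝ] C i)
    (hdd : ∀ i, (d i) ∘ₗ (d (i + 1)) = 0)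
    (hexact0 : LinearMap.range (d 0) = ⊤)
    (hexact : ∀ i, LinearMap.ker (d i) = LinearMap.range (d (i + 1)))
    (Δ : ∀ i : ℕ, C i →ₗ[ℝ] C i)
    (hΔ0 : Δ 0 = d 0 ∘ₗ LinearMap.adjoint (d 0))
    (hΔ : ∀ i, Δ (i + 1) =
      d (i + 1) ∘ₗ LinearMap.adjoint (d (i + 1)) + LinearMap.adjoint (d i) ∘ₗ d i) :
    (∀ i, Function.Bijective (Δ i)) ∧
    ∏ i ∈ Finset.range (n + 1), (LinearMap.det (Δ i)) ^ ((-1 : ℤ) ^ i) = 1 := by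
  classical
  -- determinant of the degree-0 Laplacian
  have hdet0 : LinearMap.det (Δ 0) = detB (d 0) := by
    have hp : ∀ x ∈ LinearMap.range (d 0), Δ 0 x ∈ LinearMap.range (d 0) := by
      intro x _
      rw [hΔ0]
      exact ⟨LinearMap.adjoint (d 0) x, rfl⟩
    have hq : ∀ x ∈ (LinearMap.range (d 0))ᗮ, Δ 0 x ∈ (LinearMap.range (d 0))ᗮ := by
      intro x hx
      rw [hexact0, Submodule.top_orthogonal_eq_bot, Submodule.mem_bot] at hx ⊢
      rw [hx, map_zero]
    rw [det_restrict_mul Submodule.isCompl_orthogonal_of_hasOrthogonalProjection (Δ 0) hp hq]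
    have hq1 : LinearMap.det ((Δ 0).restrict hq) = 1 := by
      haveI : Subsingleton ((LinearMap.range (d 0))ᗮ : Submodule ℝ (C 0)) := by
        rw [hexact0, Submodule.top_orthogonal_eq_bot]
        exact ⟨fun a b => Subtype.ext (by
          rw [(Submodule.mem_bot ℝ).mp a.2, (Submodule.mem_bot ℝ).mp b.2])⟩
      exact det_of_subsingleton' _
    have hp1 : LinearMap.det ((Δ 0).restrict hp) = detB (d 0) := by
      refine Eq.trans (det_restrict_congr rfl ?_ hp (maps_range (d 0))) (detA_eq_detB (d 0))
      intro x _
      rw [hΔ0]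
    rw [hp1, hq1, mul_one]
  -- determinant of the higher Laplacians
  have hdets : ∀ i, LinearMap.det (Δ (i + 1)) = detB (d (i + 1)) * detB (d i) := by
    intro i
    have horth : (LinearMap.range (d (i + 1)))ᗮ = (LinearMap.ker (d i))ᗮ := by
      rw [hexact i]
    have hp : ∀ x ∈ LinearMap.range (d (i + 1)), Δ (i + 1) x ∈ LinearMap.range (d (i + 1)) := by
      intro x hx
      have hdix : d i x = 0 := by
        rw [← LinearMap.mem_ker, hexact i]
        exact hx
      rw [hΔ i, LinearMap.add_apply]
      exact add_mem ⟨LinearMap.adjoint (d (i + 1)) x, rfl⟩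
        (by rw [LinearMap.comp_apply, hdix, map_zero]; exact zero_mem _)
    have hq : ∀ x ∈ (LinearMap.range (d (i + 1)))ᗮ,
        Δ (i + 1) x ∈ (LinearMap.range (d (i + 1)))ᗮ := by
      intro x hx
      have hax : LinearMap.adjoint (d (i + 1)) x = 0 := by
        rw [← LinearMap.mem_ker, ker_adjoint_eq]
        exact hx
      rw [hΔ i, LinearMap.add_apply, LinearMap.comp_apply, hax, map_zero, zero_add, horth]
      exact maps_kerorth (d i) x (by rw [← horth]; exact hx)
    rw [det_restrict_mul Submodule.isCompl_orthogonal_of_hasOrthogonalProjection (Δ (i + 1)) hp hq]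
    have hp1 : LinearMap.det ((Δ (i + 1)).restrict hp) = detB (d (i + 1)) := by
      refine Eq.trans (det_restrict_congr rfl ?_ hp (maps_range (d (i + 1))))
        (detA_eq_detB (d (i + 1)))
      intro x hx
      have hdix : d i x = 0 := by
        rw [← LinearMap.mem_ker, hexact i]
        exact hx
      rw [hΔ i, LinearMap.add_apply, LinearMap.comp_apply (LinearMap.adjoint (d i)), hdix,
        map_zero, add_zero]
    have hq1 : LinearMap.det ((Δ (i + 1)).restrict hq) = detB (d i) := by
      refine det_restrict_congr horth ?_ hq (maps_kerorth (d i))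
      intro x hx
      have hax : LinearMap.adjoint (d (i + 1)) x = 0 := by
        rw [← LinearMap.mem_ker, ker_adjoint_eq]
        exact hx
      rw [hΔ i, LinearMap.add_apply, LinearMap.comp_apply (d (i + 1)), hax, map_zero, zero_add]
    rw [hp1, hq1]
  -- bijectivity
  have hbij : ∀ i, Function.Bijective (Δ i) := by
    intro i
    apply bijective_of_det_ne_zero'
    cases i with
    | zero => rw [hdet0]; exact detB_ne_zero (d 0)
    | succ k => rw [hdets k]; exact mul_ne_zero (detB_ne_zero (d (k + 1))) (detB_ne_zero (d k))
  refine ⟨hbij, ?_⟩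
  have htel := telescope' (fun i => detB (d i)) (fun i => LinearMap.det (Δ i))
    (fun i => detB_ne_zero (d i)) hdet0 hdets n
  rw [htel]
  haveI : Subsingleton (C (n + 1)) := hbound (n + 1) (Nat.lt_succ_self n)
  rw [detB_eq_one (d n), one_zpow]
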